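/- Let n be odd and let (W_{n+1}, σ) be the signed wheel C_n ∨ K₁ in which every rim edge (edge of C_n) is negative and every spoke (edge incident to the hub) is positive. Then the spectrum of D^±(W_{n+1}, σ) consists of the two simple eigenvalues n − 4 ± √(n² − 7n + 16) together with the eigenvalues −2 − 6cos(2jπ/n) for j = 1, 2, …, n − 1. -/

import Mathlib

open SimpleGraph

/-- The sign (product of edge signs) of a walk in a graph, computed along its darts. -/
def walkSign {V : Type*} {G : SimpleGraph V} (σ : V → V → ℤ) {u v : V} (p : G.Walk u v) : ℤ :=
  (p.darts.map fun d => σ d.toProd.1 d.toProd.2).prod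

/-- `σ` is a signature on `G`: a symmetric function that is `±1`-valued on edges. -/
def IsSignature {V : Type*} (G : SimpleGraph V) (σ : V → V → ℤ) : Prop :=
  (∀ u v, σ u v = σ v u) ∧ ∀ u v, G.Adj u v → σ u v = 1 ∨ σ u v = -1

/-- A signed graph is balanced when every cycle has sign `+1`. -/
def IsBalanced {V : Type*} (G : SimpleGraph V) (σ : V → V → ℤ) : Prop :=
  ∀ (u : V) (p : G.Walk u u), p.IsCycle → walkSign σ p = 1

/-- A walk is a shortest path when it is a path whose length is the graph distance
between its endpoints. -/
def IsShortestPath {V : Type*} {G : SimpleGraph V} {u v : V} (p : G.Walk u v) : Prop :=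
  p.IsPath ∧ p.length = G.dist u v

open scoped Classical in
/-- `σmax u v = +1` if some shortest `u v`-path is positive, `-1` otherwise. -/
noncomputable def sigmaMax {V : Type*} (G : SimpleGraph V) (σ : V → V → ℤ) (u v : V) : ℤ :=
  if ∃ p : G.Walk u v, IsShortestPath p ∧ walkSign σ p = 1 then 1 else -1

open scoped Classical in
/-- `σmin u v = +1` if all shortest `u v`-paths are positive, `-1` otherwise. -/
noncomputable def sigmaMin {V : Type*} (G : SimpleGraph V) (σ : V → V → ℤ) (u v : V) : ℤ :=
  if ∀ p : G.Walk u v, IsShortestPath p → walkSign σ p = 1 then 1 else -1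

/-- The signed distance matrix `D^max`, with `(u,v)` entry `σmax(u,v)·d(u,v)`. -/
noncomputable def Dmax {V : Type*} (G : SimpleGraph V) (σ : V → V → ℤ) : Matrix V V ℝ :=
  Matrix.of fun u v => (sigmaMax G σ u v : ℝ) * (G.dist u v : ℝ)

/-- The signed distance matrix `D^min`, with `(u,v)` entry `σmin(u,v)·d(u,v)`. -/
noncomputable def Dmin {V : Type*} (G : SimpleGraph V) (σ : V → V → ℤ) : Matrix V V ℝ :=
  Matrix.of fun u v => (sigmaMin G σ u v : ℝ) * (G.dist u v : ℝ)

/-- Two vertices are distance-compatible if all shortest paths between them have the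
same sign. -/
def Compatible {V : Type*} (G : SimpleGraph V) (σ : V → V → ℤ) (u v : V) : Prop :=
  ∀ p q : G.Walk u v, IsShortestPath p → IsShortestPath q → walkSign σ p = walkSign σ q

/-- A signed graph is distance-compatible if every pair of vertices is
distance-compatible. -/
def IsCompatibleGraph {V : Type*} (G : SimpleGraph V) (σ : V → V → ℤ) : Prop :=
  ∀ u v, Compatible G σ u v

/-- The largest eigenvalue of a (symmetric) real matrix: the supremum of the set of real
roots of its characteristic polynomial. -/
noncomputable def largestEigenvalue {n : Type*} [Fintype n] [DecidableEq n]
    (M : Matrix n n ℝ) : ℝ :=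
  sSup {x : ℝ | M.charpoly.IsRoot x}

/-- The wheel `W_{n+1} = C_n ∨ K₁`: the join of the cycle `C_n` with one hub vertex. -/
def wheelGraph (n : ℕ) : SimpleGraph (Fin n ⊕ Unit) where
  Adj u v :=
    match u, v with
    | Sum.inl i, Sum.inl j => (SimpleGraph.cycleGraph n).Adj i j
    | Sum.inl _, Sum.inr _ => True
    | Sum.inr _, Sum.inl _ => True
    | Sum.inr _, Sum.inr _ => False
  symm := by
    constructor
    rintro (i | i) (j | j) h <;> simp_all
    exact ((SimpleGraph.cycleGraph n).adj_symm h)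
  loopless := by
    constructor
    rintro (i | i) h
    · exact (SimpleGraph.cycleGraph n).irrefl h
    · exact h

/-- The signature of the signed wheel: rim edges (edges of `C_n`) are negative and
spokes (edges at the hub) are positive. -/
def wheelSign (n : ℕ) : (Fin n ⊕ Unit) → (Fin n ⊕ Unit) → ℤ
  | Sum.inl _, Sum.inl _ => -1
  | _, _ => 1

section WheelAux

open SimpleGraph

variable {n : ℕ}

/-- The explicit common value of `Dmax` and `Dmin` for the signed wheel. -/
noncomputable def wheelD (n : ℕ) : Matrix (Fin n ⊕ Unit) (Fin n ⊕ Unit) ℝ :=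
  Matrix.of fun u v =>
    match u, v with
    | Sum.inl i, Sum.inl j =>
        if i = j then 0 else if (SimpleGraph.cycleGraph n).Adj i j then -1 else 2
    | Sum.inl _, Sum.inr _ => 1
    | Sum.inr _, Sum.inl _ => 1
    | Sum.inr _, Sum.inr _ => 0

lemma wheel_reachable (u v : Fin n ⊕ Unit) : (wheelGraph n).Reachable u v := by
  have h : ∀ w, (wheelGraph n).Reachable w (Sum.inr ()) := by
    rintro (i | ⟨⟩)
    · exact SimpleGraph.Adj.reachable trivial
    · exact SimpleGraph.Reachable.refl _
  exact (h u).trans (h v).symm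

@[simp] lemma walkSign_nil {V : Type*} {G : SimpleGraph V} (σ : V → V → ℤ) (u : V) :
    walkSign σ (SimpleGraph.Walk.nil : G.Walk u u) = 1 := rfl

@[simp] lemma walkSign_cons {V : Type*} {G : SimpleGraph V} (σ : V → V → ℤ) {u w v : V}
    (h : G.Adj u w) (p : G.Walk w v) :
    walkSign σ (SimpleGraph.Walk.cons h p) = σ u w * walkSign σ p := by
  simp [walkSign]

lemma walkSign_length_one {V : Type*} {G : SimpleGraph V} (σ : V → V → ℤ) {u v : V}
    (p : G.Walk u v) (h : p.length = 1) : walkSign σ p = σ u v := by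
  cases p with
  | nil => simp at h
  | cons h' q =>
    cases q with
    | nil => simp
    | cons h'' r => simp at h

lemma wheel_sign_two_step {i j : Fin n} (x : Fin n ⊕ Unit) :
    wheelSign n (Sum.inl i) x * wheelSign n x (Sum.inl j) = 1 := by
  rcases x with k | ⟨⟩ <;> simp [wheelSign]

lemma walkSign_wheel_length_two {i j : Fin n}
    (p : (wheelGraph n).Walk (Sum.inl i) (Sum.inl j)) (h : p.length = 2) :
    walkSign (wheelSign n) p = 1 := by
  cases p with
  | nil => simp at h
  | cons h' q =>
    cases q with
    | nil => simp at h
    | cons h'' r =>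
      cases r with
      | nil => simpa using wheel_sign_two_step _
      | cons h''' s => simp at h

lemma wheel_dist_inl_inr (i : Fin n) :
    (wheelGraph n).dist (Sum.inl i) (Sum.inr ()) = 1 :=
  SimpleGraph.dist_eq_one_iff_adj.mpr trivial

lemma wheel_dist_inr_inl (i : Fin n) :
    (wheelGraph n).dist (Sum.inr ()) (Sum.inl i) = 1 :=
  SimpleGraph.dist_eq_one_iff_adj.mpr trivial

lemma wheel_dist_adj {i j : Fin n} (h : (SimpleGraph.cycleGraph n).Adj i j) :
    (wheelGraph n).dist (Sum.inl i) (Sum.inl j) = 1 :=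
  SimpleGraph.dist_eq_one_iff_adj.mpr h

lemma wheel_dist_nonadj {i j : Fin n} (hne : i ≠ j)
    (h : ¬ (SimpleGraph.cycleGraph n).Adj i j) :
    (wheelGraph n).dist (Sum.inl i) (Sum.inl j) = 2 := by
  have h2 : (wheelGraph n).dist (Sum.inl i) (Sum.inl j) ≤ 2 := by
    have h2' := SimpleGraph.dist_le
      (SimpleGraph.Walk.cons (show (wheelGraph n).Adj (Sum.inl i) (Sum.inr ()) from trivial)
        (SimpleGraph.Walk.cons (show (wheelGraph n).Adj (Sum.inr ()) (Sum.inl j) from trivial)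
          SimpleGraph.Walk.nil))
    simpa using h2'
  have h0 : (wheelGraph n).dist (Sum.inl i) (Sum.inl j) ≠ 0 := by
    have := (wheel_reachable (Sum.inl i) (Sum.inl j)).pos_dist_of_ne
      (by simpa using hne)
    omega
  have h1 : (wheelGraph n).dist (Sum.inl i) (Sum.inl j) ≠ 1 := by
    intro hc
    have hadj := SimpleGraph.dist_eq_one_iff_adj.mp hc
    exact h hadj
  omega

lemma sigmaMax_wheel_adj_rim {i j : Fin n} (h : (SimpleGraph.cycleGraph n).Adj i j) :
    sigmaMax (wheelGraph n) (wheelSign n) (Sum.inl i) (Sum.inl j) = -1 := by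
  rw [sigmaMax, if_neg]
  rintro ⟨p, ⟨-, hlen⟩, hsign⟩
  rw [wheel_dist_adj h] at hlen
  rw [walkSign_length_one _ p hlen] at hsign
  simp [wheelSign] at hsign

lemma sigmaMin_wheel_adj_rim {i j : Fin n} (h : (SimpleGraph.cycleGraph n).Adj i j) :
    sigmaMin (wheelGraph n) (wheelSign n) (Sum.inl i) (Sum.inl j) = -1 := by
  rw [sigmaMin, if_neg]
  intro hall
  obtain ⟨p, hp, hlen⟩ := (wheel_reachable (Sum.inl i) (Sum.inl j)).exists_path_of_dist
  have := hall p ⟨hp, hlen⟩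
  rw [wheel_dist_adj h] at hlen
  rw [walkSign_length_one _ p hlen] at this
  simp [wheelSign] at this

lemma sigmaMax_wheel_nonadj {i j : Fin n} (hne : i ≠ j)
    (h : ¬ (SimpleGraph.cycleGraph n).Adj i j) :
    sigmaMax (wheelGraph n) (wheelSign n) (Sum.inl i) (Sum.inl j) = 1 := by
  rw [sigmaMax, if_pos]
  obtain ⟨p, hp, hlen⟩ := (wheel_reachable (Sum.inl i) (Sum.inl j)).exists_path_of_dist
  refine ⟨p, ⟨hp, hlen⟩, ?_⟩
  rw [wheel_dist_nonadj hne h] at hlen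
  exact walkSign_wheel_length_two p hlen

lemma sigmaMin_wheel_nonadj {i j : Fin n} (hne : i ≠ j)
    (h : ¬ (SimpleGraph.cycleGraph n).Adj i j) :
    sigmaMin (wheelGraph n) (wheelSign n) (Sum.inl i) (Sum.inl j) = 1 := by
  rw [sigmaMin, if_pos]
  rintro p ⟨-, hlen⟩
  rw [wheel_dist_nonadj hne h] at hlen
  exact walkSign_wheel_length_two p hlen

lemma sigmaMax_wheel_spoke1 (i : Fin n) :
    sigmaMax (wheelGraph n) (wheelSign n) (Sum.inl i) (Sum.inr ()) = 1 := by
  rw [sigmaMax, if_pos]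
  obtain ⟨p, hp, hlen⟩ :=
    (wheel_reachable (Sum.inl i) (Sum.inr ())).exists_path_of_dist
  refine ⟨p, ⟨hp, hlen⟩, ?_⟩
  rw [wheel_dist_inl_inr] at hlen
  rw [walkSign_length_one _ p hlen]
  rfl

lemma sigmaMin_wheel_spoke1 (i : Fin n) :
    sigmaMin (wheelGraph n) (wheelSign n) (Sum.inl i) (Sum.inr ()) = 1 := by
  rw [sigmaMin, if_pos]
  rintro p ⟨-, hlen⟩
  rw [wheel_dist_inl_inr] at hlen
  rw [walkSign_length_one _ p hlen]
  rfl

lemma sigmaMax_wheel_spoke2 (i : Fin n) :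
    sigmaMax (wheelGraph n) (wheelSign n) (Sum.inr ()) (Sum.inl i) = 1 := by
  rw [sigmaMax, if_pos]
  obtain ⟨p, hp, hlen⟩ :=
    (wheel_reachable (Sum.inr ()) (Sum.inl i)).exists_path_of_dist
  refine ⟨p, ⟨hp, hlen⟩, ?_⟩
  rw [wheel_dist_inr_inl] at hlen
  rw [walkSign_length_one _ p hlen]
  rfl

lemma sigmaMin_wheel_spoke2 (i : Fin n) :
    sigmaMin (wheelGraph n) (wheelSign n) (Sum.inr ()) (Sum.inl i) = 1 := by
  rw [sigmaMin, if_pos]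
  rintro p ⟨-, hlen⟩
  rw [wheel_dist_inr_inl] at hlen
  rw [walkSign_length_one _ p hlen]
  rfl

lemma Dmax_wheel_eq : Dmax (wheelGraph n) (wheelSign n) = wheelD n := by
  ext u v
  rcases u with i | u <;> rcases v with j | v <;> (try cases u) <;> (try cases v)
  · rcases eq_or_ne i j with rfl | hne
    · simp [Dmax, wheelD]
    · by_cases h : (SimpleGraph.cycleGraph n).Adj i j
      · simp [Dmax, wheelD, hne, h, sigmaMax_wheel_adj_rim h, wheel_dist_adj h]
      · simp [Dmax, wheelD, hne, h, sigmaMax_wheel_nonadj hne h, wheel_dist_nonadj hne h]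
  · simp [Dmax, wheelD, sigmaMax_wheel_spoke1, wheel_dist_inl_inr]
  · simp [Dmax, wheelD, sigmaMax_wheel_spoke2, wheel_dist_inr_inl]
  · simp [Dmax, wheelD]

lemma Dmin_wheel_eq : Dmin (wheelGraph n) (wheelSign n) = wheelD n := by
  ext u v
  rcases u with i | u <;> rcases v with j | v <;> (try cases u) <;> (try cases v)
  · rcases eq_or_ne i j with rfl | hne
    · simp [Dmin, wheelD]
    · by_cases h : (SimpleGraph.cycleGraph n).Adj i j
      · simp [Dmin, wheelD, hne, h, sigmaMin_wheel_adj_rim h, wheel_dist_adj h]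
      · simp [Dmin, wheelD, hne, h, sigmaMin_wheel_nonadj hne h, wheel_dist_nonadj hne h]
  · simp [Dmin, wheelD, sigmaMin_wheel_spoke1, wheel_dist_inl_inr]
  · simp [Dmin, wheelD, sigmaMin_wheel_spoke2, wheel_dist_inr_inl]
  · simp [Dmin, wheelD]

end WheelAux
section WheelSpec

open Matrix Polynomial

variable (n : ℕ)

noncomputable def wsS : ℝ := Real.sqrt ((n:ℝ)^2 - 7*n + 16)
noncomputable def wsLp : ℝ := (n:ℝ) - 4 + wsS n
noncomputable def wsLm : ℝ := (n:ℝ) - 4 - wsS n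
noncomputable def wsTp : ℝ := wsS n - ((n:ℝ) - 4)
noncomputable def wsTm : ℝ := -(wsS n + ((n:ℝ) - 4))
noncomputable def wsMu (j : ℕ) : ℝ := -2 - 6 * Real.cos (2 * (j:ℝ) * Real.pi / n)

noncomputable def wsD : (Fin n ⊕ Unit) → ℝ
  | Sum.inl j => if j.val = 0 then wsLp n else wsMu n j.val
  | Sum.inr _ => wsLm n

lemma wsS_sq : wsS n ^ 2 = (n:ℝ)^2 - 7*n + 16 := by
  rw [wsS, Real.sq_sqrt]
  nlinarith [sq_nonneg ((n:ℝ) - 4), Nat.cast_nonneg (α := ℝ) n]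

lemma wsLp_eq : wsLp n = 2*(n:ℝ) - 8 + wsTp n := by unfold wsLp wsTp; ring
lemma wsLm_eq : wsLm n = 2*(n:ℝ) - 8 + wsTm n := by unfold wsLm wsTm; ring
lemma wsTpLp : wsTp n * wsLp n = n := by
  have h := wsS_sq n; unfold wsTp wsLp; nlinarith [h]
lemma wsTmLm : wsTm n * wsLm n = n := by
  have h := wsS_sq n; unfold wsTm wsLm; nlinarith [h]
lemma wsTpTm : (n:ℝ) + wsTp n * wsTm n = 0 := by
  have h := wsS_sq n; unfold wsTp wsTm; nlinarith [h]
lemma wsCp_pos (hn3 : 3 ≤ n) : (0:ℝ) < (n:ℝ) + wsTp n ^ 2 := by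
  have : (3:ℝ) ≤ n := by exact_mod_cast hn3
  nlinarith [sq_nonneg (wsTp n)]
lemma wsCm_pos (hn3 : 3 ≤ n) : (0:ℝ) < (n:ℝ) + wsTm n ^ 2 := by
  have : (3:ℝ) ≤ n := by exact_mod_cast hn3
  nlinarith [sq_nonneg (wsTm n)]

noncomputable def wsOm : ℂ := Complex.exp (2 * Real.pi * Complex.I / n)
noncomputable def wsG (m : ℤ) : ℂ := wsOm n ^ m

lemma wsOm_ne_zero : wsOm n ≠ 0 := Complex.exp_ne_zero _

lemma wsOm_prim (hn : n ≠ 0) : IsPrimitiveRoot (wsOm n) n :=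
  Complex.isPrimitiveRoot_exp n hn

@[simp] lemma wsG_zero : wsG n 0 = 1 := by simp [wsG]

lemma wsG_add (a b : ℤ) : wsG n (a + b) = wsG n a * wsG n b :=
  zpow_add₀ (wsOm_ne_zero n) a b

lemma wsG_eq_one_iff (hn : n ≠ 0) (m : ℤ) : wsG n m = 1 ↔ (n:ℤ) ∣ m :=
  (wsOm_prim n hn).zpow_eq_one_iff_dvd m

lemma wsG_mod (hn : n ≠ 0) {a b : ℤ} (h : (n:ℤ) ∣ a - b) : wsG n a = wsG n b := by
  have h1 : wsG n (a - b) = 1 := (wsG_eq_one_iff n hn _).mpr h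
  have := wsG_add n b (a - b)
  rw [h1, mul_one] at this
  simpa using this

lemma wsG_sum (hn : n ≠ 0) (m : ℤ) :
    (∑ k : Fin n, wsG n (m * k.val)) = if (n:ℤ) ∣ m then (n:ℂ) else 0 := by
  have hpow : ∀ k : ℕ, wsG n (m * k) = (wsG n m) ^ k := by
    intro k
    rw [wsG, wsG, _root_.zpow_mul, zpow_natCast]
  rw [Fin.sum_univ_eq_sum_range (fun k : ℕ => wsG n (m * k)) n]
  by_cases hd : (n:ℤ) ∣ m
  · have h1 : wsG n m = 1 := (wsG_eq_one_iff n hn m).mpr hd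
    rw [if_pos hd]
    simp [hpow, h1]
  · have h1 : wsG n m ≠ 1 := fun hc => hd ((wsG_eq_one_iff n hn m).mp hc)
    have hn1 : (wsG n m) ^ n = 1 := by
      rw [← hpow]
      exact (wsG_eq_one_iff n hn _).mpr ⟨m, mul_comm _ _⟩
    simp only [hpow]
    rw [geom_sum_eq h1, hn1, if_neg hd]
    simp

lemma int_emod_sub_dvd (a : ℤ) (hn : n ≠ 0) : (n:ℤ) ∣ a % n - a := by
  have : a % (n:ℤ) - a = -((n:ℤ) * (a / n)) := by rw [Int.emod_def]; ring
  rw [this]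
  exact (dvd_mul_right _ _).neg_right

lemma fin_val_one [NeZero n] (hn3 : 3 ≤ n) : ((1 : Fin n) : ℕ) = 1 := by
  rw [Fin.val_one']
  exact Nat.mod_eq_of_lt (by omega)

lemma fin_shift_up [NeZero n] (hn3 : 3 ≤ n) (k : Fin n) :
    (n:ℤ) ∣ ((k + 1 : Fin n).val : ℤ) - ((k.val : ℤ) + 1) := by
  have h2 : ((k + 1 : Fin n) : ℕ) = (k.val + 1) % n := by
    rw [Fin.val_add, fin_val_one n hn3]
  rw [h2]
  have h3 : (((k.val + 1) % n : ℕ) : ℤ) = ((k.val : ℤ) + 1) % (n:ℤ) := by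
    push_cast
    rfl
  rw [h3]
  exact int_emod_sub_dvd n _ (by omega)

lemma fin_shift_down [NeZero n] (hn3 : 3 ≤ n) (k : Fin n) :
    (n:ℤ) ∣ ((k - 1 : Fin n).val : ℤ) - ((k.val : ℤ) - 1) := by
  have h := fin_shift_up n hn3 (k - 1)
  rw [sub_add_cancel] at h
  have heq : ((k - 1 : Fin n).val : ℤ) - ((k.val : ℤ) - 1)
      = -(((k.val : ℤ)) - (((k - 1 : Fin n).val : ℤ) + 1)) := by ring
  rw [heq]
  exact dvd_neg.mpr h

lemma fin_sub_ne_add [NeZero n] (hn3 : 3 ≤ n) (k : Fin n) : k - 1 ≠ k + 1 := by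
  intro h
  have h1 := fin_shift_up n hn3 k
  have h2 := fin_shift_down n hn3 k
  rw [h] at h2
  have hd : (n:ℤ) ∣ 2 := by
    have h3 := dvd_sub h2 h1
    convert h3 using 1
    case e'_4 => ring
    case e'_2 => rfl
  have := Int.le_of_dvd (by norm_num) hd
  omega

lemma fin_dvd_iff (hn3 : 3 ≤ n) (j : Fin n) : (n:ℤ) ∣ (j.val : ℤ) ↔ j.val = 0 := by
  constructor
  · intro h
    have := Int.eq_zero_of_abs_lt_dvd h (by
      have := j.isLt
      rw [abs_of_nonneg (by positivity)]
      exact_mod_cast this)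
    omega
  · intro h
    simp [h]

lemma fin_dvd_sub_iff (hn3 : 3 ≤ n) (j j' : Fin n) :
    (n:ℤ) ∣ ((j'.val : ℤ) - j.val) ↔ j' = j := by
  constructor
  · intro h
    have h1 := Int.eq_zero_of_abs_lt_dvd h (by
      have := j.isLt; have := j'.isLt
      rw [abs_sub_lt_iff]
      constructor <;> push_cast <;> omega)
    ext
    omega
  · rintro rfl
    simp

end WheelSpec
section WheelMat

open Matrix Polynomial

variable (n : ℕ)

/-- Complex version of the signed distance matrix. -/
noncomputable def wsDC : Matrix (Fin n ⊕ Unit) (Fin n ⊕ Unit) ℂ :=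
  Matrix.of fun u v =>
    match u, v with
    | Sum.inl i, Sum.inl j =>
        if i = j then 0 else if (SimpleGraph.cycleGraph n).Adj i j then -1 else 2
    | Sum.inl _, Sum.inr _ => 1
    | Sum.inr _, Sum.inl _ => 1
    | Sum.inr _, Sum.inr _ => 0

/-- The eigenvector matrix. -/
noncomputable def wsP : Matrix (Fin n ⊕ Unit) (Fin n ⊕ Unit) ℂ :=
  Matrix.of fun x y =>
    match x, y with
    | Sum.inl k, Sum.inl j => wsG n ((j.val : ℤ) * k.val)
    | Sum.inr _, Sum.inl j => if j.val = 0 then (wsTp n : ℂ) else 0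
    | Sum.inl _, Sum.inr _ => 1
    | Sum.inr _, Sum.inr _ => (wsTm n : ℂ)

/-- The inverse of the eigenvector matrix. -/
noncomputable def wsQ : Matrix (Fin n ⊕ Unit) (Fin n ⊕ Unit) ℂ :=
  Matrix.of fun x y =>
    match x, y with
    | Sum.inl j, Sum.inl k =>
        if j.val = 0 then (((n:ℝ) + wsTp n ^ 2 : ℝ) : ℂ)⁻¹
        else (n:ℂ)⁻¹ * wsG n (-((j.val : ℤ) * k.val))
    | Sum.inl j, Sum.inr _ =>
        if j.val = 0 then (((n:ℝ) + wsTp n ^ 2 : ℝ) : ℂ)⁻¹ * (wsTp n : ℂ) else 0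
    | Sum.inr _, Sum.inl _ => (((n:ℝ) + wsTm n ^ 2 : ℝ) : ℂ)⁻¹
    | Sum.inr _, Sum.inr _ => (((n:ℝ) + wsTm n ^ 2 : ℝ) : ℂ)⁻¹ * (wsTm n : ℂ)

noncomputable def wsL : Matrix (Fin n ⊕ Unit) (Fin n ⊕ Unit) ℂ :=
  Matrix.diagonal (fun x => (wsD n x : ℂ))

@[simp] lemma wsDC_ll (i j : Fin n) : wsDC n (Sum.inl i) (Sum.inl j)
    = if i = j then 0 else if (SimpleGraph.cycleGraph n).Adj i j then -1 else 2 := rfl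
@[simp] lemma wsDC_lr (i : Fin n) (u : Unit) : wsDC n (Sum.inl i) (Sum.inr u) = 1 := rfl
@[simp] lemma wsDC_rl (i : Fin n) (u : Unit) : wsDC n (Sum.inr u) (Sum.inl i) = 1 := rfl
@[simp] lemma wsDC_rr (u v : Unit) : wsDC n (Sum.inr u) (Sum.inr v) = 0 := rfl
@[simp] lemma wsP_ll (k j : Fin n) : wsP n (Sum.inl k) (Sum.inl j) = wsG n ((j.val : ℤ) * k.val) := rfl
@[simp] lemma wsP_rl (u : Unit) (j : Fin n) :
    wsP n (Sum.inr u) (Sum.inl j) = if j.val = 0 then (wsTp n : ℂ) else 0 := rfl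
@[simp] lemma wsP_lr (k : Fin n) (u : Unit) : wsP n (Sum.inl k) (Sum.inr u) = 1 := rfl
@[simp] lemma wsP_rr (u v : Unit) : wsP n (Sum.inr u) (Sum.inr v) = (wsTm n : ℂ) := rfl
@[simp] lemma wsQ_ll (j k : Fin n) : wsQ n (Sum.inl j) (Sum.inl k)
    = if j.val = 0 then (((n:ℝ) + wsTp n ^ 2 : ℝ) : ℂ)⁻¹
      else (n:ℂ)⁻¹ * wsG n (-((j.val : ℤ) * k.val)) := rfl
@[simp] lemma wsQ_lr (j : Fin n) (u : Unit) : wsQ n (Sum.inl j) (Sum.inr u)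
    = if j.val = 0 then (((n:ℝ) + wsTp n ^ 2 : ℝ) : ℂ)⁻¹ * (wsTp n : ℂ) else 0 := rfl
@[simp] lemma wsQ_rl (u : Unit) (k : Fin n) :
    wsQ n (Sum.inr u) (Sum.inl k) = (((n:ℝ) + wsTm n ^ 2 : ℝ) : ℂ)⁻¹ := rfl
@[simp] lemma wsQ_rr (u v : Unit) :
    wsQ n (Sum.inr u) (Sum.inr v) = (((n:ℝ) + wsTm n ^ 2 : ℝ) : ℂ)⁻¹ * (wsTm n : ℂ) := rfl

@[simp] lemma wsD_inl (j : Fin n) :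
    wsD n (Sum.inl j) = if j.val = 0 then wsLp n else wsMu n j.val := rfl
@[simp] lemma wsD_inr (u : Unit) : wsD n (Sum.inr u) = wsLm n := rfl

lemma wheelD_map : (wheelD n).map (algebraMap ℝ ℂ) = wsDC n := by
  ext u v
  rcases u with i | u <;> rcases v with j | v <;>
      simp [wheelD, wsDC, Matrix.map_apply, apply_ite (algebraMap ℝ ℂ)] <;>
    split_ifs <;> norm_num

lemma cycle_filter [NeZero n] (hn3 : 3 ≤ n) (k : Fin n) :
    Finset.univ.filter (fun k' => (SimpleGraph.cycleGraph n).Adj k k') = {k - 1, k + 1} := by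
  ext k'
  simp only [Finset.mem_filter, Finset.mem_univ, true_and, Finset.mem_insert,
    Finset.mem_singleton, SimpleGraph.cycleGraph_adj']
  have h1 : ((1 : Fin n) : ℕ) = 1 := fin_val_one n hn3
  constructor
  · rintro (h | h)
    · left
      have h2 : k - k' = 1 := by ext; rw [h1]; exact h
      rw [← h2, sub_sub_cancel]
    · right
      have h2 : k' - k = 1 := by ext; rw [h1]; exact h
      rw [← h2, add_comm]
      exact (sub_add_cancel k' k).symm
  · rintro (rfl | rfl)
    · left
      rw [sub_sub_cancel, h1]
    · right
      rw [add_sub_cancel_left, h1]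

lemma wsDC_rowsum [NeZero n] (hn3 : 3 ≤ n) (k : Fin n) (f : Fin n → ℂ) :
    (∑ k', wsDC n (Sum.inl k) (Sum.inl k') * f k')
      = 2 * (∑ k', f k') - 2 * f k - 3 * (f (k - 1) + f (k + 1)) := by
  have hent : ∀ k', wsDC n (Sum.inl k) (Sum.inl k') * f k'
      = 2 * f k' - (if k = k' then 2 * f k' else 0)
        - (if (SimpleGraph.cycleGraph n).Adj k k' then 3 * f k' else 0) := by
    intro k'
    by_cases h : k = k'
    · subst h
      simp [SimpleGraph.irrefl]
    · by_cases ha : (SimpleGraph.cycleGraph n).Adj k k'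
      · simp only [wsDC_ll, if_neg h, if_pos ha]
        ring
      · simp only [wsDC_ll, if_neg h, if_neg ha]
        ring
  rw [Finset.sum_congr rfl (fun k' _ => hent k'), Finset.sum_sub_distrib,
    Finset.sum_sub_distrib, ← Finset.mul_sum]
  have e1 : (∑ k', if k = k' then 2 * f k' else 0) = 2 * f k := by
    rw [Finset.sum_ite_eq]; simp
  have e2 : (∑ k', if (SimpleGraph.cycleGraph n).Adj k k' then 3 * f k' else 0)
      = 3 * f (k - 1) + 3 * f (k + 1) := by
    rw [← Finset.sum_filter, cycle_filter n hn3 k,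
      Finset.sum_insert (by simp [fin_sub_ne_add n hn3 k]), Finset.sum_singleton]
  rw [e1, e2]
  ring

lemma wsG_cos (hn3 : 3 ≤ n) (m : ℕ) :
    wsG n (m : ℤ) + wsG n (-(m : ℤ))
      = ((2 * Real.cos (2 * (m:ℝ) * Real.pi / n) : ℝ) : ℂ) := by
  have hnC : (n:ℂ) ≠ 0 := Nat.cast_ne_zero.mpr (by omega)
  have hexp : ∀ s : ℤ, wsG n s = Complex.exp ((s:ℂ) * (2 * Real.pi * Complex.I / n)) := by
    intro s
    rw [wsG, wsOm, ← Complex.exp_int_mul]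
  set θ : ℝ := 2 * (m:ℝ) * Real.pi / n with hθ
  have h5 : wsG n (m:ℤ) = Complex.exp ((θ:ℂ) * Complex.I) := by
    rw [hexp]
    congr 1
    rw [hθ]
    push_cast
    ring
  have h4 : wsG n (-(m:ℤ)) = Complex.exp (-(θ:ℂ) * Complex.I) := by
    rw [hexp]
    congr 1
    rw [hθ]
    push_cast
    ring
  rw [h5, h4]
  rw [Complex.exp_mul_I, Complex.exp_mul_I]
  rw [Complex.cos_neg, Complex.sin_neg, ← Complex.ofReal_cos]
  push_cast
  ring

end WheelMat
section WheelEigen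

open Matrix Polynomial

variable (n : ℕ)

lemma ws_shift_up [NeZero n] (hn3 : 3 ≤ n) (j k : Fin n) :
    wsG n ((j.val:ℤ) * ((k + 1 : Fin n).val))
      = wsG n ((j.val:ℤ) * k.val) * wsG n (j.val:ℤ) := by
  rw [← wsG_add]
  apply wsG_mod n (by omega)
  have h := (fin_shift_up n hn3 k).mul_left (j.val:ℤ)
  convert h using 1
  case e'_4 => ring
  case e'_2 => rfl

lemma ws_shift_down [NeZero n] (hn3 : 3 ≤ n) (j k : Fin n) :
    wsG n ((j.val:ℤ) * ((k - 1 : Fin n).val))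
      = wsG n ((j.val:ℤ) * k.val) * wsG n (-(j.val:ℤ)) := by
  rw [← wsG_add]
  apply wsG_mod n (by omega)
  have h := (fin_shift_down n hn3 k).mul_left (j.val:ℤ)
  convert h using 1
  case e'_4 => ring
  case e'_2 => rfl

lemma wsEigen [NeZero n] (hn3 : 3 ≤ n) : wsDC n * wsP n = wsP n * wsL n := by
  have hn0 : n ≠ 0 := by omega
  ext x y
  rw [wsL, Matrix.mul_diagonal, Matrix.mul_apply, Fintype.sum_sum_type]
  rcases x with k | u <;> rcases y with j | v
  · simp only [wsP_ll, wsP_rl, wsDC_lr]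
    rw [wsDC_rowsum n hn3 k (fun k' => wsG n ((j.val:ℤ) * k'.val))]
    simp only [ws_shift_down n hn3 j k, ws_shift_up n hn3 j k]
    rw [wsG_sum n hn0]
    by_cases hj : j.val = 0
    · have hj' : ((j.val:ℤ)) = 0 := by exact_mod_cast hj
      have hc : ((wsLp n : ℝ):ℂ) = 2*(n:ℂ) - 8 + ((wsTp n : ℝ):ℂ) := by
        rw [wsLp_eq]
        push_cast
        ring
      rw [if_pos (show (n:ℤ) ∣ ((j.val:ℤ)) by rw [hj']; exact dvd_zero _)]
      simp only [hj', hj, Nat.cast_zero, zero_mul, neg_zero, wsG_zero, wsD_inl, if_true, one_mul, mul_one,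
        Finset.univ_unique, Finset.sum_singleton, ite_true]
      linear_combination -hc
    · have hnd : ¬ ((n:ℤ) ∣ (j.val:ℤ)) := by
        rw [fin_dvd_iff n hn3]
        exact hj
      rw [if_neg hnd]
      have hcos := wsG_cos n hn3 j.val
      have hmu : ((wsMu n j.val : ℝ):ℂ)
          = -2 - 3*(wsG n (j.val:ℤ) + wsG n (-(j.val:ℤ))) := by
        rw [wsMu, hcos]
        push_cast
        ring
      simp only [wsD_inl, if_neg hj, hj, if_false, one_mul]
      simp only [Finset.univ_unique, Finset.sum_singleton, ite_false]
      linear_combination (-(wsG n ((j.val:ℤ) * k.val))) * hmu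
  · simp only [wsP_lr, wsP_rr, wsDC_lr]
    rw [wsDC_rowsum n hn3 k (fun _ => (1:ℂ))]
    have hc : ((wsLm n : ℝ):ℂ) = 2*(n:ℂ) - 8 + ((wsTm n : ℝ):ℂ) := by
      rw [wsLm_eq]
      push_cast
      ring
    simp [wsD_inr, hc]
    ring
  · simp only [wsDC_rl, wsDC_rr, wsP_ll, wsP_rl, one_mul, zero_mul]
    rw [wsG_sum n hn0]
    by_cases hj : j.val = 0
    · have hc : ((wsTp n : ℝ):ℂ) * ((wsLp n : ℝ):ℂ) = (n:ℂ) := by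
        exact_mod_cast wsTpLp n
      rw [if_pos (by rw [fin_dvd_iff n hn3]; exact hj)]
      simp [wsD_inl, hj, hc]
    · rw [if_neg (by rw [fin_dvd_iff n hn3]; exact hj)]
      simp [wsD_inl, hj]
  · simp only [wsDC_rl, wsDC_rr, wsP_lr, wsP_rr, one_mul, zero_mul]
    have hc : ((wsTm n : ℝ):ℂ) * ((wsLm n : ℝ):ℂ) = (n:ℂ) := by
      exact_mod_cast wsTmLm n
    simp [wsD_inr, hc]

lemma wsQP [NeZero n] (hn3 : 3 ≤ n) : wsQ n * wsP n = 1 := by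
  have hn0 : n ≠ 0 := by omega
  have hcp : (((n:ℝ) + wsTp n ^ 2 : ℝ) : ℂ) ≠ 0 :=
    Complex.ofReal_ne_zero.mpr (ne_of_gt (wsCp_pos n hn3))
  have hcm : (((n:ℝ) + wsTm n ^ 2 : ℝ) : ℂ) ≠ 0 :=
    Complex.ofReal_ne_zero.mpr (ne_of_gt (wsCm_pos n hn3))
  have hnC : (n:ℂ) ≠ 0 := Nat.cast_ne_zero.mpr hn0
  push_cast at hcp hcm
  have htm : ((n:ℂ) + (wsTp n:ℂ) * (wsTm n:ℂ)) = 0 := by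
    have := wsTpTm n
    exact_mod_cast this
  ext x y
  rw [Matrix.mul_apply, Fintype.sum_sum_type]
  rcases x with j | u <;> rcases y with j' | v
  · simp only [wsQ_ll, wsQ_lr, wsP_ll, wsP_rl]
    by_cases hj : j.val = 0
    · simp only [if_pos hj]
      rw [← Finset.mul_sum, wsG_sum n hn0]
      simp only [fin_dvd_iff n hn3]
      by_cases hj' : j'.val = 0
      · have hjj : j = j' := Fin.ext (by rw [hj, hj'])
        subst hjj
        rw [if_pos hj', if_pos hj', Matrix.one_apply_eq]
        simp only [Finset.univ_unique, Finset.sum_singleton]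
        push_cast
        field_simp [hcp]
      · rw [if_neg hj', if_neg hj']
        have : (Sum.inl j : Fin n ⊕ Unit) ≠ Sum.inl j' := by
          simp only [ne_eq, Sum.inl.injEq]
          intro hcon
          rw [hcon] at hj
          exact hj' hj
        simp [Matrix.one_apply, this]
    · simp only [if_neg hj]
      have hterm : ∀ k : Fin n,
          ((n:ℂ)⁻¹ * wsG n (-((j.val:ℤ) * k.val))) * wsG n ((j'.val:ℤ) * k.val)
            = (n:ℂ)⁻¹ * wsG n (((j'.val:ℤ) - j.val) * k.val) := by
        intro k
        rw [mul_assoc, ← wsG_add]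
        congr 2
        ring
      rw [Finset.sum_congr rfl (fun k _ => hterm k), ← Finset.mul_sum,
        wsG_sum n hn0]
      simp only [fin_dvd_sub_iff n hn3]
      by_cases hjj : j' = j
      · subst hjj
        rw [if_pos rfl, Matrix.one_apply_eq]
        simp [inv_mul_cancel₀ hnC, hj]
      · rw [if_neg hjj]
        have : (Sum.inl j : Fin n ⊕ Unit) ≠ Sum.inl j' := by
          simp only [ne_eq, Sum.inl.injEq]
          exact fun hcon => hjj hcon.symm
        simp [Matrix.one_apply, this, hj]
  · simp only [wsQ_ll, wsQ_lr, wsP_lr, wsP_rr]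
    by_cases hj : j.val = 0
    · simp only [if_pos hj, mul_one]
      rw [Finset.sum_const]
      simp only [Matrix.one_apply, Finset.card_univ, Fintype.card_fin,
        Finset.univ_unique, Finset.sum_singleton]
      have : (Sum.inl j : Fin n ⊕ Unit) ≠ Sum.inr v := by simp
      rw [if_neg this]
      push_cast
      linear_combination ((n:ℂ) + (wsTp n:ℂ)^2)⁻¹ * htm
    · simp only [if_neg hj, mul_one]
      have hterm : ∀ k : Fin n,
          (n:ℂ)⁻¹ * wsG n (-((j.val:ℤ) * k.val))
            = (n:ℂ)⁻¹ * wsG n ((-(j.val:ℤ)) * k.val) := by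
        intro k
        congr 2
        ring
      rw [Finset.sum_congr rfl (fun k _ => hterm k), ← Finset.mul_sum, wsG_sum n hn0]
      rw [if_neg (show ¬ ((n:ℤ) ∣ -(j.val:ℤ)) by rw [dvd_neg, fin_dvd_iff n hn3]; exact hj)]
      have : (Sum.inl j : Fin n ⊕ Unit) ≠ Sum.inr v := by simp
      simp [Matrix.one_apply, this]
  · simp only [wsQ_rl, wsQ_rr, wsP_ll, wsP_rl]
    rw [← Finset.mul_sum, wsG_sum n hn0]
    simp only [fin_dvd_iff n hn3]
    have hne : (Sum.inr u : Fin n ⊕ Unit) ≠ Sum.inl j' := by simp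
    by_cases hj' : j'.val = 0
    · rw [if_pos hj', if_pos hj']
      simp only [Matrix.one_apply, if_neg hne, Finset.univ_unique, Finset.sum_singleton]
      push_cast
      linear_combination ((n:ℂ) + (wsTm n:ℂ)^2)⁻¹ * htm
    · rw [if_neg hj', if_neg hj']
      simp [Matrix.one_apply, hne]
  · simp only [wsQ_rl, wsQ_rr, wsP_lr, wsP_rr, mul_one]
    cases u
    cases v
    rw [Finset.sum_const, Matrix.one_apply_eq]
    simp only [Finset.card_univ, Fintype.card_fin, Finset.univ_unique, Finset.sum_singleton]
    push_cast
    rw [nsmul_eq_mul]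
    field_simp [hcm]

end WheelEigen
section WheelFinal

open Matrix Polynomial

variable (n : ℕ)

lemma ws_charpoly_similar {ι : Type*} [Fintype ι] [DecidableEq ι]
    (A B M : Matrix ι ι ℂ) (h : A * B = 1) :
    (A * M * B).charpoly = M.charpoly := by
  unfold Matrix.charpoly
  have hone : (A.map (C : ℂ →+* ℂ[X])) * (B.map C) = 1 := by
    rw [← Matrix.map_mul, h, Matrix.map_one _ (map_zero C) (map_one C)]
  have hch : charmatrix (A * M * B)
      = A.map (C : ℂ →+* ℂ[X]) * charmatrix M * B.map C := by
    unfold charmatrix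
    simp only [RingHom.mapMatrix_apply]
    rw [Matrix.scalar_apply, ← Matrix.smul_one_eq_diagonal]
    rw [Matrix.mul_sub, Matrix.sub_mul]
    congr 1
    · rw [mul_smul_comm, mul_one, smul_mul_assoc, hone]
    · rw [← Matrix.map_mul, ← Matrix.map_mul]
  rw [hch, det_mul, det_mul]
  have h2 : (A.map (C : ℂ →+* ℂ[X])).det * (B.map C).det = 1 := by
    rw [← det_mul, hone, det_one]
  rw [mul_comm ((A.map (C : ℂ →+* ℂ[X])).det) _, mul_assoc, h2, mul_one]

lemma ws_charpoly_diag {ι : Type*} [Fintype ι] [DecidableEq ι] (d : ι → ℂ) :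
    (Matrix.diagonal d).charpoly = ∏ i, (X - C (d i)) := by
  unfold Matrix.charpoly
  have hch : charmatrix (Matrix.diagonal d)
      = Matrix.diagonal (fun i => (X : ℂ[X]) - C (d i)) := by
    refine Matrix.ext fun i j => ?_
    by_cases h : i = j
    · subst h
      simp
    · simp [charmatrix_apply_ne _ _ _ h, Matrix.diagonal_apply_ne _ h]
  rw [hch, det_diagonal]

lemma wheelD_charpoly (hn3 : 3 ≤ n) :
    (wheelD n).charpoly
      = (((Finset.univ : Finset (Fin n ⊕ Unit)).val.map (wsD n)).map
          (fun a => X - C a)).prod := by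
  haveI : NeZero n := ⟨by omega⟩
  apply Polynomial.map_injective (algebraMap ℝ ℂ) (algebraMap ℝ ℂ).injective
  rw [← Matrix.charpoly_map, wheelD_map]
  have hPQ : wsP n * wsQ n = 1 := mul_eq_one_comm.mp (wsQP n hn3)
  have hD : wsDC n = wsP n * wsL n * wsQ n := by
    calc wsDC n = wsDC n * (wsP n * wsQ n) := by rw [hPQ, mul_one]
    _ = (wsDC n * wsP n) * wsQ n := by rw [mul_assoc]
    _ = (wsP n * wsL n) * wsQ n := by rw [wsEigen n hn3]
  rw [hD, ws_charpoly_similar _ _ _ hPQ, wsL, ws_charpoly_diag]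
  rw [Polynomial.map_multiset_prod, Multiset.map_map, Multiset.map_map]
  rw [Finset.prod_eq_multiset_prod]
  congr 1
  apply Multiset.map_congr rfl
  intro x _
  simp

lemma ws_cons_swap (a b : ℝ) (M : Multiset ℝ) : a ::ₘ M + {b} = a ::ₘ b ::ₘ M := by
  rw [← Multiset.singleton_add, ← Multiset.singleton_add, ← Multiset.singleton_add,
    add_assoc, add_comm M]

lemma wsD_multiset [NeZero n] (hn3 : 3 ≤ n) :
    (Finset.univ : Finset (Fin n ⊕ Unit)).val.map (wsD n)
      = wsLp n ::ₘ wsLm n ::ₘ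
          Multiset.map (fun j : ℕ => -2 - 6 * Real.cos (2 * (j:ℝ) * Real.pi / n))
            (Finset.Icc 1 (n-1)).val := by
  have h1 : (Finset.univ : Finset (Fin n ⊕ Unit)).val
      = (Finset.univ : Finset (Fin n)).val.map Sum.inl
        + (Finset.univ : Finset Unit).val.map Sum.inr := by
    rw [← Finset.univ_disjSum_univ]
    rfl
  rw [h1, Multiset.map_add, Multiset.map_map, Multiset.map_map]
  have h2 : (Finset.univ : Finset Unit).val.map (wsD n ∘ Sum.inr) = {wsLm n} := rfl
  have h3 : (Finset.univ : Finset (Fin n)).val.map (wsD n ∘ Sum.inl)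
      = wsLp n ::ₘ
          Multiset.map (fun j : ℕ => -2 - 6 * Real.cos (2 * (j:ℝ) * Real.pi / n))
            (Finset.Icc 1 (n-1)).val := by
    have h4 : (Finset.univ : Finset (Fin n)) = insert 0 ((Finset.univ : Finset (Fin n)).erase 0) :=
      (Finset.insert_erase (Finset.mem_univ 0)).symm
    rw [h4, Finset.insert_val_of_notMem (Finset.notMem_erase _ _), Multiset.map_cons]
    have hhead : (wsD n ∘ Sum.inl) (0 : Fin n) = wsLp n := by simp
    rw [hhead]
    congr 1
    · have h5 : Multiset.map (wsD n ∘ Sum.inl) ((Finset.univ : Finset (Fin n)).erase 0).val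
          = Multiset.map
              ((fun j : ℕ => -2 - 6 * Real.cos (2 * (j:ℝ) * Real.pi / n)) ∘ Fin.val)
              ((Finset.univ : Finset (Fin n)).erase 0).val := by
        apply Multiset.map_congr rfl
        intro x hx
        have hx0 : x ≠ 0 := (Finset.mem_erase.mp (Finset.mem_val.mp hx)).1
        have hxv : x.val ≠ 0 := fun hc => hx0 (Fin.ext (by simp [hc]))
        simp [wsD_inl, hxv, wsMu]
      rw [h5, ← Multiset.map_map]
      congr 1
      have h6 : Finset.map ⟨Fin.val, Fin.val_injective⟩ ((Finset.univ : Finset (Fin n)).erase 0)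
          = Finset.Icc 1 (n-1) := by
        ext a
        simp only [Finset.mem_map, Finset.mem_erase, Finset.mem_univ, and_true,
          Function.Embedding.coeFn_mk, Finset.mem_Icc]
        constructor
        · rintro ⟨x, hx0, rfl⟩
          have h7 := x.isLt
          have h8 : x.val ≠ 0 := fun hc => hx0 (Fin.ext (by simp [hc]))
          omega
        · rintro ⟨ha1, ha2⟩
          refine ⟨⟨a, by omega⟩, ?_, rfl⟩
          intro hc
          have : a = 0 := by
            have := congrArg Fin.val hc
            simpa using this
          omega
      calc Multiset.map Fin.val ((Finset.univ : Finset (Fin n)).erase 0).val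
          = (Finset.map ⟨Fin.val, Fin.val_injective⟩ ((Finset.univ : Finset (Fin n)).erase 0)).val := by
            rw [Finset.map_val]
            rfl
        _ = (Finset.Icc 1 (n-1)).val := by rw [h6]
  rw [h3, h2, ws_cons_swap]

end WheelFinal

open Real in
/-- For odd `n`, the signed wheel `(W_{n+1}, σ)` with all rim edges
negative and all spokes positive has `D^± = D^max = D^min`, and the spectrum of
`D^±(W_{n+1}, σ)` consists of the two simple eigenvalues `n - 4 ± √(n² - 7n + 16)`
together with the eigenvalues `-2 - 6·cos(2jπ/n)` for `j = 1, 2, …, n - 1`. -/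
theorem signed_wheel_distance_spectrum (n : ℕ) (hodd : Odd n) (hn : 3 ≤ n) :
    Dmax (wheelGraph n) (wheelSign n) = Dmin (wheelGraph n) (wheelSign n) ∧
    (Dmax (wheelGraph n) (wheelSign n)).charpoly.roots =
      ((n : ℝ) - 4 + Real.sqrt ((n : ℝ) ^ 2 - 7 * n + 16)) ::ₘ
        ((n : ℝ) - 4 - Real.sqrt ((n : ℝ) ^ 2 - 7 * n + 16)) ::ₘ
          Multiset.map (fun j => -2 - 6 * Real.cos (2 * (j : ℝ) * π / n))
            (Finset.Icc 1 (n - 1)).val := by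
  haveI : NeZero n := ⟨by omega⟩
  constructor
  · rw [Dmax_wheel_eq, Dmin_wheel_eq]
  · rw [Dmax_wheel_eq, wheelD_charpoly n hn, Polynomial.roots_multiset_prod_X_sub_C,
      wsD_multiset n hn]
    unfold wsLp wsLm wsS
    congr 1
    congr 1
    simp [Multiset.bind_singleton, Multiset.map_map]
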